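/- For every ϱ > 0, the operator mapping f to the function t ↦ ∫_{-∞}^t f(s) ds is a bounded linear operator on the weighted space H_{ϱ,0}(ℝ) = {f ∈ L²_loc(ℝ) : (x ↦ e^{-ϱx} f(x)) ∈ L²(ℝ)} with operator norm exactly 1/ϱ. -/

import Mathlib

open MeasureTheory Real Set

/-- Squared weighted norm integrand total: `∫ ‖f t‖² e^{-2ϱt} dt`. -/
noncomputable def wInt (ϱ : ℝ) {H : Type*} [NormedAddCommGroup H] (f : ℝ → H) : ℝ :=
  ∫ t : ℝ, ‖f t‖ ^ 2 * Real.exp (-2 * ϱ * t)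

/-- Membership in the weighted space `H_{ϱ,0}(ℝ; H)`. -/
def memW (ϱ : ℝ) {H : Type*} [NormedAddCommGroup H] (f : ℝ → H) : Prop :=
  AEStronglyMeasurable f volume ∧
    Integrable (fun t : ℝ => ‖f t‖ ^ 2 * Real.exp (-2 * ϱ * t))

/-- The weighted norm `|f|_{ϱ,0}`. -/
noncomputable def wNorm (ϱ : ℝ) {H : Type*} [NormedAddCommGroup H] (f : ℝ → H) : ℝ :=
  Real.sqrt (wInt ϱ f)

/-- Integration from -infinity: the inverse of the time derivative. -/
noncomputable def intOp (f : ℝ → ℂ) : ℝ → ℂ := fun t => ∫ s in Set.Iio t, f s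

-- Helper 1 : integrability of exp(a s) on Iic c
lemma expIntOn {a : ℝ} (ha : 0 < a) (c : ℝ) :
    IntegrableOn (fun s => Real.exp (a * s)) (Iic c) := by
  have h := exp_neg_integrableOn_Ioi (-c) ha
  rw [IntegrableOn, ← Measure.map_neg_eq_self (volume : Measure ℝ)]
  have A : MeasurableEmbedding (Neg.neg : ℝ → ℝ) :=
    (Homeomorph.neg ℝ).measurableEmbedding
  rw [show ((Measure.map Neg.neg volume).restrict (Iic c)) = ((Measure.map Neg.neg volume).restrict (Iic c)) from rfl, ← IntegrableOn, A.integrableOn_map_iff]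
  simp_rw [Function.comp_def, neg_preimage, neg_Iic]
  rw [integrableOn_Ici_iff_integrableOn_Ioi]
  simpa [mul_neg, neg_mul] using h

lemma expIntVal {a : ℝ} (ha : 0 < a) (c : ℝ) :
    ∫ s in Iic c, Real.exp (a * s) = Real.exp (a * c) / a := by
  have hd : ∀ x : ℝ, HasDerivAt (fun y => Real.exp (a * y) / a) (Real.exp (a * x)) x := by
    intro x
    have h1 : HasDerivAt (fun y : ℝ => a * y) (a * 1) x := (hasDerivAt_id x).const_mul a
    have h2 := (h1.exp).div_const a
    convert h2 using 1
    · rfl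
    · rfl
    · field_simp
  have ht : Filter.Tendsto (fun y => Real.exp (a * y) / a) Filter.atBot (nhds 0) := by
    have h1 : Filter.Tendsto (fun y : ℝ => a * y) Filter.atBot Filter.atBot :=
      Filter.Tendsto.const_mul_atBot ha Filter.tendsto_id
    have := (Real.tendsto_exp_atBot.comp h1).div_const a
    simpa using this
  have := integral_Iic_of_hasDerivAt_of_tendsto' (fun x _ => hd x) (expIntOn ha c) ht
  simpa using this

lemma expIntValIoi {a : ℝ} (ha : 0 < a) (c : ℝ) :
    ∫ t in Ioi c, Real.exp (-(a * t)) = Real.exp (-(a * c)) / a := by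
  have h := integral_comp_neg_Ioi c (fun x => Real.exp (a * x))
  simp only [mul_neg, ← neg_mul] at h
  simp only [← neg_mul]
  rw [h, expIntVal ha]
  ring_nf

lemma exp_sq (x : ℝ) : Real.exp x ^ 2 = Real.exp (2 * x) := by
  rw [sq, ← Real.exp_add]; ring_nf

lemma memW.integrableOn {ϱ : ℝ} (hϱ : 0 < ϱ) {f : ℝ → ℂ} (hf : memW ϱ f) (t : ℝ) :
    IntegrableOn f (Iio t) := by
  have h2ϱ : (0:ℝ) < 2 * ϱ := by linarith
  refine Integrable.mono'
    (g := fun s => (‖f s‖ ^ 2 * Real.exp (-2 * ϱ * s) + Real.exp (2 * ϱ * s)) / 2)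
    ?_ hf.1.restrict ?_
  · exact ((hf.2.restrict).add ((expIntOn h2ϱ t).mono_set Iio_subset_Iic_self)).div_const 2
  · refine Filter.Eventually.of_forall (fun s => ?_)
    have e1 : Real.exp (-ϱ * s) * Real.exp (ϱ * s) = 1 := by
      rw [← Real.exp_add]; ring_nf; exact Real.exp_zero
    have e2 : Real.exp (-ϱ * s) ^ 2 = Real.exp (-2 * ϱ * s) := by
      rw [exp_sq]; ring_nf
    have e3 : Real.exp (ϱ * s) ^ 2 = Real.exp (2 * ϱ * s) := by
      rw [exp_sq]; ring_nf
    have key : ‖f s‖ = (‖f s‖ * Real.exp (-ϱ * s)) * Real.exp (ϱ * s) := by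
      rw [mul_assoc, e1, mul_one]
    have hsq := sq_nonneg (‖f s‖ * Real.exp (-ϱ * s) - Real.exp (ϱ * s))
    nth_rw 1 [key]
    nlinarith [mul_pow (‖f s‖) (Real.exp (-ϱ * s)) 2, e2, e3]

lemma memW.integrableOn₂ {ϱ : ℝ} (hϱ : 0 < ϱ) {f : ℝ → ℂ} (hf : memW ϱ f) (t : ℝ) :
    IntegrableOn (fun s => ‖f s‖ ^ 2 * Real.exp (-ϱ * s)) (Iio t) := by
  refine Integrable.mono'
    (g := fun s => Real.exp (ϱ * t) * (‖f s‖ ^ 2 * Real.exp (-2 * ϱ * s)))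
    ((hf.2.restrict).const_mul _) ?_ ?_
  · exact (((hf.1.aemeasurable.norm.pow_const 2).mul
      ((Real.measurable_exp.comp (measurable_id.const_mul (-ϱ))).aemeasurable)).aestronglyMeasurable).restrict
  · rw [ae_restrict_iff' measurableSet_Iio]
    refine Filter.Eventually.of_forall (fun s hs => ?_)
    have hs' : s < t := hs
    have e1 : Real.exp (-ϱ * s) = Real.exp (-2 * ϱ * s) * Real.exp (ϱ * s) := by
      rw [← Real.exp_add]; ring_nf
    have e2 : Real.exp (ϱ * s) ≤ Real.exp (ϱ * t) :=
      Real.exp_le_exp.2 (by nlinarith)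
    have h0 : (0:ℝ) ≤ ‖f s‖ ^ 2 * Real.exp (-2 * ϱ * s) :=
      mul_nonneg (sq_nonneg _) (Real.exp_pos _).le
    rw [Real.norm_of_nonneg (mul_nonneg (sq_nonneg _) (Real.exp_pos _).le), e1, ← mul_assoc]
    calc ‖f s‖ ^ 2 * Real.exp (-2 * ϱ * s) * Real.exp (ϱ * s)
        ≤ ‖f s‖ ^ 2 * Real.exp (-2 * ϱ * s) * Real.exp (ϱ * t) :=
          mul_le_mul_of_nonneg_left e2 h0
      _ = Real.exp (ϱ * t) * (‖f s‖ ^ 2 * Real.exp (-2 * ϱ * s)) := by ring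

lemma memW.intervalIntegrable {ϱ : ℝ} (hϱ : 0 < ϱ) {f : ℝ → ℂ} (hf : memW ϱ f)
    (a b : ℝ) : IntervalIntegrable f volume a b := by
  rw [intervalIntegrable_iff]
  refine (memW.integrableOn hϱ hf (max a b + 1)).mono_set (fun x hx => ?_)
  exact lt_of_le_of_lt hx.2 (by linarith [le_max_left a b, le_max_right a b] : max a b < max a b + 1)

lemma intOp_rep {ϱ : ℝ} (hϱ : 0 < ϱ) {f : ℝ → ℂ} (hf : memW ϱ f) (t : ℝ) :
    intOp f t = intOp f 0 + ∫ x in (0:ℝ)..t, f x := by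
  have hio : ∀ u : ℝ, IntegrableOn f (Iio u) := memW.integrableOn hϱ hf
  rcases le_or_gt 0 t with h | h
  · have hset : Iio (0:ℝ) ∪ Ico 0 t = Iio t := Iio_union_Ico_eq_Iio h
    have hdisj : Disjoint (Iio (0:ℝ)) (Ico 0 t) := by
      refine Set.disjoint_left.2 (fun x hx hx' => ?_)
      exact absurd hx'.1 (not_le.2 hx)
    have := setIntegral_union hdisj measurableSet_Ico (hio 0)
      ((hio t).mono_set (fun x hx => lt_of_lt_of_le hx.2 le_rfl))
    rw [intOp, ← hset, this, intOp]
    congr 1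
    rw [intervalIntegral.integral_of_le h, integral_Ico_eq_integral_Ioo,
      integral_Ioc_eq_integral_Ioo]
  · have hset : Iio t ∪ Ico t 0 = Iio (0:ℝ) := Iio_union_Ico_eq_Iio h.le
    have hdisj : Disjoint (Iio t) (Ico t 0) := by
      refine Set.disjoint_left.2 (fun x hx hx' => ?_)
      exact absurd hx'.1 (not_le.2 hx)
    have h0 := setIntegral_union hdisj measurableSet_Ico (hio t)
      ((hio 0).mono_set (fun x hx => lt_of_lt_of_le hx.2 le_rfl))
    have hI : ∫ x in (0:ℝ)..t, f x = -∫ x in Ico t 0, f x := by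
      rw [intervalIntegral.integral_symm, intervalIntegral.integral_of_le h.le,
        integral_Ico_eq_integral_Ioo, integral_Ioc_eq_integral_Ioo]
    rw [intOp, intOp, ← hset, h0, hI]
    ring

lemma intOp_cont {ϱ : ℝ} (hϱ : 0 < ϱ) {f : ℝ → ℂ} (hf : memW ϱ f) :
    Continuous (intOp f) := by
  rw [show intOp f = fun t => intOp f 0 + ∫ x in (0:ℝ)..t, f x from
    funext (intOp_rep hϱ hf)]
  exact continuous_const.add
    (intervalIntegral.continuous_primitive (memW.intervalIntegrable hϱ hf) 0)

lemma ptwise {ϱ : ℝ} (hϱ : 0 < ϱ) {f : ℝ → ℂ} (hf : memW ϱ f) (t : ℝ) :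
    ‖intOp f t‖ ^ 2 * Real.exp (-2 * ϱ * t) ≤
      Real.exp (-ϱ * t) / ϱ * ∫ s in Iio t, ‖f s‖ ^ 2 * Real.exp (-ϱ * s) := by
  set I1 := ∫ s in Iio t, ‖f s‖ ^ 2 * Real.exp (-ϱ * s) with hI1def
  have hI1 : 0 ≤ I1 := setIntegral_nonneg measurableSet_Iio
    (fun s _ => mul_nonneg (sq_nonneg _) (Real.exp_pos _).le)
  set F := fun s => ‖f s‖ * Real.exp (-(ϱ/2) * s) with hFdef
  set G := fun s : ℝ => Real.exp ((ϱ/2) * s) with hGdef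
  have hF2 : ∀ s, F s ^ 2 = ‖f s‖ ^ 2 * Real.exp (-ϱ * s) := by
    intro s; rw [hFdef]; simp only [mul_pow, exp_sq]; ring_nf
  have hG2 : ∀ s, G s ^ 2 = Real.exp (ϱ * s) := by
    intro s; rw [hGdef]; simp only [exp_sq]; ring_nf
  have hFG : ∀ s, F s * G s = ‖f s‖ := by
    intro s
    rw [hFdef, hGdef, mul_assoc, ← Real.exp_add]
    norm_num
  have hpq : (2:ℝ).HolderConjugate 2 := by rw [Real.holderConjugate_iff]; norm_num
  have h2 : ENNReal.ofReal (2:ℝ) = 2 := by norm_num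
  have hFm : AEStronglyMeasurable F (volume.restrict (Iio t)) :=
    (hf.1.norm.mul ((Real.continuous_exp.comp
      (continuous_const.mul continuous_id)).aestronglyMeasurable)).restrict
  have hGm : AEStronglyMeasurable G (volume.restrict (Iio t)) :=
    ((Real.continuous_exp.comp (continuous_const.mul continuous_id)).aestronglyMeasurable).restrict
  have hFmem : MemLp F (ENNReal.ofReal 2) (volume.restrict (Iio t)) := by
    rw [h2]
    refine (memLp_two_iff_integrable_sq hFm).2 ?_
    have := memW.integrableOn₂ hϱ hf t
    exact this.congr (Filter.Eventually.of_forall (fun s => (hF2 s).symm))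
  have hGmem : MemLp G (ENNReal.ofReal 2) (volume.restrict (Iio t)) := by
    rw [h2]
    refine (memLp_two_iff_integrable_sq hGm).2 ?_
    have : IntegrableOn (fun s => Real.exp (ϱ * s)) (Iio t) :=
      (expIntOn hϱ t).mono_set Iio_subset_Iic_self
    exact this.congr (Filter.Eventually.of_forall (fun s => (hG2 s).symm))
  have hCS := integral_mul_le_Lp_mul_Lq_of_nonneg hpq
    (Filter.Eventually.of_forall (fun s => mul_nonneg (norm_nonneg _) (Real.exp_pos _).le))
    (Filter.Eventually.of_forall (fun s => (Real.exp_pos _).le)) hFmem hGmem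
  have hrpow : ∀ x : ℝ, x ^ (2:ℝ) = x ^ 2 := fun x => by
    rw [show (2:ℝ) = ((2:ℕ):ℝ) by norm_num, Real.rpow_natCast]
  simp only [hrpow, hFG, hF2, hG2] at hCS
  simp only [hFdef, hGdef] at hFG hF2 hG2
  simp only [hFG, hF2, hG2] at hCS
  have hGint : ∫ s in Iio t, Real.exp (ϱ * s) = Real.exp (ϱ * t) / ϱ := by
    rw [← integral_Iic_eq_integral_Iio, expIntVal hϱ]
  rw [hGint] at hCS
  set E := Real.exp (ϱ * t) / ϱ with hEdef
  have hE : 0 ≤ E := div_nonneg (Real.exp_pos _).le hϱ.le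
  have hn : ‖intOp f t‖ ≤ ∫ s in Iio t, ‖f s‖ := norm_integral_le_integral_norm f
  have h4 : ‖intOp f t‖ ≤ I1 ^ ((1:ℝ)/2) * E ^ ((1:ℝ)/2) := le_trans hn hCS
  have hsq : ‖intOp f t‖ ^ 2 ≤ (I1 ^ ((1:ℝ)/2) * E ^ ((1:ℝ)/2)) ^ 2 :=
    pow_le_pow_left₀ (norm_nonneg _) h4 2
  have hs1 : (I1 ^ ((1:ℝ)/2)) ^ 2 = I1 := by
    rw [← Real.rpow_natCast (I1 ^ ((1:ℝ)/2)) 2, ← Real.rpow_mul hI1]; norm_num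
  have hs2 : (E ^ ((1:ℝ)/2)) ^ 2 = E := by
    rw [← Real.rpow_natCast (E ^ ((1:ℝ)/2)) 2, ← Real.rpow_mul hE]; norm_num
  have hsq' : ‖intOp f t‖ ^ 2 ≤ I1 * E := by
    rw [mul_pow, hs1, hs2] at hsq; exact hsq
  have hexp : E * Real.exp (-2 * ϱ * t) = Real.exp (-ϱ * t) / ϱ := by
    rw [hEdef, div_mul_eq_mul_div, ← Real.exp_add]; ring_nf
  calc ‖intOp f t‖ ^ 2 * Real.exp (-2 * ϱ * t)
      ≤ I1 * E * Real.exp (-2 * ϱ * t) :=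
        mul_le_mul_of_nonneg_right hsq' (Real.exp_pos _).le
    _ = Real.exp (-ϱ * t) / ϱ * I1 := by rw [mul_assoc, hexp]; ring

open scoped ENNReal

lemma tonelli_aux {a : ℝ} (ha : 0 < a) (G : ℝ → ℝ≥0∞) (hG : Measurable G) :
    ∫⁻ t : ℝ, ENNReal.ofReal (Real.exp (-(a * t))) * ∫⁻ s in Iio t, G s
      = (ENNReal.ofReal a)⁻¹ * ∫⁻ s : ℝ, ENNReal.ofReal (Real.exp (-(a * s))) * G s := by
  set F : ℝ → ℝ → ℝ≥0∞ := fun t s =>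
    Set.indicator {p : ℝ × ℝ | p.2 < p.1} (fun p => ENNReal.ofReal (Real.exp (-(a * p.1))) * G p.2)
      (t, s) with hFdef
  have hFmeas : Measurable (Function.uncurry F) := by
    have hset : MeasurableSet {p : ℝ × ℝ | p.2 < p.1} :=
      measurableSet_lt measurable_snd measurable_fst
    have hfun : Measurable (fun p : ℝ × ℝ => ENNReal.ofReal (Real.exp (-(a * p.1))) * G p.2) := by
      refine Measurable.mul ?_ (hG.comp measurable_snd)
      exact ENNReal.measurable_ofReal.comp
        (Real.measurable_exp.comp (measurable_fst.const_mul a).neg)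
    have : Function.uncurry F = Set.indicator {p : ℝ × ℝ | p.2 < p.1}
        (fun p => ENNReal.ofReal (Real.exp (-(a * p.1))) * G p.2) := by
      ext p; rw [Function.uncurry, hFdef]
    rw [this]
    exact hfun.indicator hset
  have h1 : ∀ t : ℝ, ENNReal.ofReal (Real.exp (-(a * t))) * ∫⁻ s in Iio t, G s
      = ∫⁻ s : ℝ, F t s := by
    intro t
    rw [← lintegral_const_mul' _ _ ENNReal.ofReal_ne_top, ← lintegral_indicator measurableSet_Iio]
    refine lintegral_congr (fun s => ?_)
    by_cases h : s < t
    · simp [hFdef, Set.indicator_of_mem, h, Set.mem_Iio.2 h, Set.indicator]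
    · simp [hFdef, Set.indicator, h]
  have h2 : ∀ s : ℝ, (∫⁻ t : ℝ, F t s)
      = G s * ENNReal.ofReal (Real.exp (-(a * s)) / a) := by
    intro s
    have : (fun t => F t s) = Set.indicator (Ioi s)
        (fun t => ENNReal.ofReal (Real.exp (-(a * t))) * G s) := by
      ext t
      by_cases h : s < t
      · simp [hFdef, Set.indicator, h]
      · simp [hFdef, Set.indicator, h]
    have hmeas2 : Measurable fun t : ℝ => ENNReal.ofReal (Real.exp (-(a * t))) := by
      exact ENNReal.measurable_ofReal.comp
        (Real.measurable_exp.comp ((measurable_const.mul measurable_id).neg))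
    rw [this, lintegral_indicator measurableSet_Ioi, lintegral_mul_const _ hmeas2]
    have hint : Integrable (fun t => Real.exp (-(a * t))) (volume.restrict (Ioi s)) := by
      have := exp_neg_integrableOn_Ioi s ha
      exact (by simpa [neg_mul] using this : IntegrableOn (fun t => Real.exp (-(a * t))) (Ioi s))
    have := ofReal_integral_eq_lintegral_ofReal hint
      (Filter.Eventually.of_forall (fun t => (Real.exp_pos _).le))
    rw [← this, expIntValIoi ha s, mul_comm]
  calc ∫⁻ t : ℝ, ENNReal.ofReal (Real.exp (-(a * t))) * ∫⁻ s in Iio t, G s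
      = ∫⁻ t : ℝ, ∫⁻ s : ℝ, F t s := lintegral_congr h1
    _ = ∫⁻ s : ℝ, ∫⁻ t : ℝ, F t s := lintegral_lintegral_swap hFmeas.aemeasurable
    _ = ∫⁻ s : ℝ, G s * ENNReal.ofReal (Real.exp (-(a * s)) / a) := lintegral_congr h2
    _ = ∫⁻ s : ℝ, (ENNReal.ofReal a)⁻¹ * (ENNReal.ofReal (Real.exp (-(a * s))) * G s) := by
        refine lintegral_congr (fun s => ?_)
        rw [ENNReal.ofReal_div_of_pos ha, div_eq_mul_inv]
        ring
    _ = (ENNReal.ofReal a)⁻¹ * ∫⁻ s : ℝ, ENNReal.ofReal (Real.exp (-(a * s))) * G s :=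
        lintegral_const_mul' _ _ (ENNReal.inv_ne_top.mpr (ENNReal.ofReal_pos.2 ha).ne')

lemma main3 {ϱ : ℝ} (hϱ : 0 < ϱ) {f : ℝ → ℂ} (hf : memW ϱ f) :
    memW ϱ (intOp f) ∧ wInt ϱ (intOp f) ≤ 1/ϱ * (1/ϱ * wInt ϱ f) := by
  set g : ℝ → ℝ := fun s => ‖f s‖ ^ 2 * Real.exp (-ϱ * s) with hgdef
  have hg_nonneg : ∀ s, 0 ≤ g s := fun s => mul_nonneg (sq_nonneg _) (Real.exp_pos _).le
  have hg_am : AEMeasurable g volume :=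
    (hf.1.aemeasurable.norm.pow_const 2).mul
      ((Real.measurable_exp.comp (measurable_id.const_mul (-ϱ))).aemeasurable)
  set g' := hg_am.mk g with hg'def
  have hgg' : g =ᵐ[volume] g' := hg_am.ae_eq_mk
  have hg'meas : Measurable g' := hg_am.measurable_mk
  set G : ℝ → ℝ≥0∞ := fun s => ENNReal.ofReal (g' s) with hGdef
  have hGmeas : Measurable G := hg'meas.ennreal_ofReal
  set A : ℝ → ℝ := fun t => ∫ s in Iio t, g s with hAdef
  have hA_nonneg : ∀ t, 0 ≤ A t := fun t =>
    setIntegral_nonneg measurableSet_Iio (fun s _ => hg_nonneg s)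
  have hA_eq : ∀ t, ENNReal.ofReal (A t) = ∫⁻ s in Iio t, G s := by
    intro t
    rw [hAdef]
    rw [ofReal_integral_eq_lintegral_ofReal (memW.integrableOn₂ hϱ hf t)
      (Filter.Eventually.of_forall (fun s => hg_nonneg s))]
    refine lintegral_congr_ae (ae_restrict_of_ae (hgg'.mono (fun s h => ?_)))
    show ENNReal.ofReal (g s) = ENNReal.ofReal (g' s)
    rw [h]
  have hA_mono : Monotone A := by
    intro u v huv
    exact setIntegral_mono_set (memW.integrableOn₂ hϱ hf v)
      (Filter.Eventually.of_forall (fun s => hg_nonneg s))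
      (HasSubset.Subset.eventuallyLE (Iio_subset_Iio huv))
  have hA_meas : Measurable A := hA_mono.measurable
  set D : ℝ → ℝ := fun t => Real.exp (-ϱ * t) / ϱ * A t with hDdef
  have hD_nonneg : ∀ t, 0 ≤ D t := fun t =>
    mul_nonneg (div_nonneg (Real.exp_pos _).le hϱ.le) (hA_nonneg t)
  have hD_meas : Measurable D :=
    ((Real.measurable_exp.comp (measurable_id.const_mul (-ϱ))).div_const ϱ).mul hA_meas
  have hwInt_nonneg : 0 ≤ wInt ϱ f :=
    integral_nonneg (fun t => mul_nonneg (sq_nonneg _) (Real.exp_pos _).le)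
  have hfun : (fun s => Real.exp (-(ϱ * s)) * g s)
      = fun s => ‖f s‖ ^ 2 * Real.exp (-2 * ϱ * s) := by
    funext s
    rw [hgdef]
    rw [show Real.exp (-(ϱ*s)) * (‖f s‖ ^ 2 * Real.exp (-ϱ * s))
      = ‖f s‖ ^ 2 * (Real.exp (-(ϱ*s)) * Real.exp (-ϱ * s)) from by ring, ← Real.exp_add]
    ring_nf
  have hGfin : ∫⁻ s : ℝ, ENNReal.ofReal (Real.exp (-(ϱ * s))) * G s
      = ENNReal.ofReal (wInt ϱ f) := by
    calc ∫⁻ s : ℝ, ENNReal.ofReal (Real.exp (-(ϱ * s))) * G s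
        = ∫⁻ s : ℝ, ENNReal.ofReal (Real.exp (-(ϱ * s)) * g s) := by
          refine lintegral_congr_ae (hgg'.mono (fun s h => ?_))
          show ENNReal.ofReal (Real.exp (-(ϱ * s))) * ENNReal.ofReal (g' s)
            = ENNReal.ofReal (Real.exp (-(ϱ * s)) * g s)
          rw [h]
          exact (ENNReal.ofReal_mul (Real.exp_pos _).le).symm
      _ = ENNReal.ofReal (∫ s : ℝ, Real.exp (-(ϱ * s)) * g s) := by
          refine (ofReal_integral_eq_lintegral_ofReal ?_
            (Filter.Eventually.of_forall (fun s => mul_nonneg (Real.exp_pos _).le (hg_nonneg s)))).symm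
          rw [hfun]; exact hf.2
      _ = ENNReal.ofReal (wInt ϱ f) := by rw [hfun]; rfl
  have hstep : ∀ t, ENNReal.ofReal (D t)
      = (ENNReal.ofReal ϱ)⁻¹ *
        (ENNReal.ofReal (Real.exp (-(ϱ * t))) * ∫⁻ s in Iio t, G s) := by
    intro t
    rw [hDdef]
    rw [ENNReal.ofReal_mul (div_nonneg (Real.exp_pos _).le hϱ.le), hA_eq t,
      ENNReal.ofReal_div_of_pos hϱ, neg_mul]
    rw [div_eq_mul_inv]
    ring
  have hinv_ne_top : (ENNReal.ofReal ϱ)⁻¹ ≠ ⊤ :=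
    ENNReal.inv_ne_top.mpr (ENNReal.ofReal_pos.2 hϱ).ne'
  have hDlint : ∫⁻ t : ℝ, ENNReal.ofReal (D t)
      = (ENNReal.ofReal ϱ)⁻¹ * ((ENNReal.ofReal ϱ)⁻¹ * ENNReal.ofReal (wInt ϱ f)) := by
    rw [lintegral_congr hstep, lintegral_const_mul' _ _ hinv_ne_top,
      tonelli_aux hϱ G hGmeas, hGfin]
  have hDfin : ∫⁻ t : ℝ, ENNReal.ofReal (D t) < ⊤ := by
    rw [hDlint]
    exact ENNReal.mul_lt_top (lt_top_iff_ne_top.2 hinv_ne_top)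
      (ENNReal.mul_lt_top (lt_top_iff_ne_top.2 hinv_ne_top) ENNReal.ofReal_lt_top)
  have hDint : Integrable D := by
    refine ⟨hD_meas.aestronglyMeasurable, ?_⟩
    rw [hasFiniteIntegral_iff_ofReal (Filter.Eventually.of_forall hD_nonneg)]
    exact hDfin
  have hDval : ∫ t : ℝ, D t = 1/ϱ * (1/ϱ * wInt ϱ f) := by
    rw [integral_eq_lintegral_of_nonneg_ae (Filter.Eventually.of_forall hD_nonneg)
      hD_meas.aestronglyMeasurable, hDlint, ENNReal.toReal_mul, ENNReal.toReal_mul,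
      ENNReal.toReal_inv, ENNReal.toReal_ofReal hϱ.le, ENNReal.toReal_ofReal hwInt_nonneg]
    simp [one_div]
  have hcont := intOp_cont hϱ hf
  have hmeas1 : AEStronglyMeasurable (fun t => ‖intOp f t‖ ^ 2 * Real.exp (-2 * ϱ * t)) volume :=
    (((hcont.norm.pow 2)).mul
      (Real.continuous_exp.comp (continuous_const.mul continuous_id))).aestronglyMeasurable
  have hbound : ∀ t, ‖intOp f t‖ ^ 2 * Real.exp (-2 * ϱ * t) ≤ D t := fun t => ptwise hϱ hf t
  have hint1 : Integrable (fun t => ‖intOp f t‖ ^ 2 * Real.exp (-2 * ϱ * t)) := by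
    refine hDint.mono' hmeas1 (Filter.Eventually.of_forall (fun t => ?_))
    rw [Real.norm_of_nonneg (mul_nonneg (sq_nonneg _) (Real.exp_pos _).le)]
    exact hbound t
  refine ⟨⟨hcont.aestronglyMeasurable, hint1⟩, ?_⟩
  calc wInt ϱ (intOp f) ≤ ∫ t : ℝ, D t :=
        integral_mono hint1 hDint hbound
    _ = 1/ϱ * (1/ϱ * wInt ϱ f) := hDval

lemma main4 {ϱ : ℝ} (hϱ : 0 < ϱ) {c : ℝ} (hc0 : 0 ≤ c) (hc : c < 1/ϱ) :
    ∃ f : ℝ → ℂ, memW ϱ f ∧ c * wNorm ϱ f < wNorm ϱ (intOp f) := by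
  set μ : ℝ := 2 / (c + 1/ϱ) with hμdef
  have hden : 0 < c + 1/ϱ := by positivity
  have hμ0 : 0 < μ := by positivity
  have h1 : ϱ * c < 1 := by
    have := (lt_div_iff₀ hϱ).1 hc
    linarith [this, mul_comm c ϱ]
  have hμϱ : ϱ < μ := by
    rw [hμdef, lt_div_iff₀ hden]
    have he : ϱ * (c + 1/ϱ) = ϱ * c + 1 := by field_simp
    rw [he]; linarith
  have hcμ : c < 1/μ := by
    rw [lt_div_iff₀ hμ0]
    have he : c * μ = 2 * c / (c + 1/ϱ) := by rw [hμdef]; ring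
    rw [he, div_lt_one hden]
    linarith
  set β : ℝ := 2 * (μ - ϱ) with hβdef
  have hβ : 0 < β := by rw [hβdef]; linarith
  set f : ℝ → ℂ := Set.indicator (Iio 0) (fun s => ((Real.exp (μ * s) : ℝ) : ℂ)) with hfdef
  have hsm : AEStronglyMeasurable f volume :=
    (Measurable.indicator (Complex.measurable_ofReal.comp
      (Real.measurable_exp.comp (measurable_id.const_mul μ))) measurableSet_Iio).aestronglyMeasurable
  have hinteq : (fun t => ‖f t‖ ^ 2 * Real.exp (-2 * ϱ * t))
      = Set.indicator (Iio 0) (fun t => Real.exp (β * t)) := by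
    funext t
    by_cases ht : t ∈ Iio 0
    · rw [hfdef, Set.indicator_of_mem ht, Set.indicator_of_mem ht]
      rw [show ‖((Real.exp (μ * t) : ℝ) : ℂ)‖ = Real.exp (μ * t) from by
        rw [Complex.norm_real, Real.norm_eq_abs, abs_of_pos (Real.exp_pos _)]]
      rw [exp_sq, ← Real.exp_add, hβdef]
      ring_nf
    · rw [hfdef, Set.indicator_of_notMem ht, Set.indicator_of_notMem ht]
      simp
  have hintf : Integrable (fun t => ‖f t‖ ^ 2 * Real.exp (-2 * ϱ * t)) := by
    rw [hinteq]
    rw [integrable_indicator_iff measurableSet_Iio]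
    exact (expIntOn hβ 0).mono_set Iio_subset_Iic_self
  have hmem : memW ϱ f := ⟨hsm, hintf⟩
  have hwf : wInt ϱ f = 1/β := by
    rw [wInt, hinteq, integral_indicator measurableSet_Iio, ← integral_Iic_eq_integral_Iio,
      expIntVal hβ]
    simp
  have hiop : ∀ t, intOp f t = ((Real.exp (μ * min t 0) / μ : ℝ) : ℂ) := by
    intro t
    calc intOp f t = ∫ s in Iio t ∩ Iio 0, ((Real.exp (μ * s) : ℝ) : ℂ) := by
          rw [intOp, hfdef]; exact setIntegral_indicator measurableSet_Iio
      _ = ∫ s in Iio (min t 0), ((Real.exp (μ * s) : ℝ) : ℂ) := by rw [Iio_inter_Iio]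
      _ = ((∫ s in Iio (min t 0), Real.exp (μ * s) : ℝ) : ℂ) := integral_ofReal
      _ = ((Real.exp (μ * min t 0) / μ : ℝ) : ℂ) := by
          rw [← integral_Iic_eq_integral_Iio, expIntVal hμ0]
  obtain ⟨hmem2, _⟩ := main3 hϱ hmem
  have hint2 : Integrable (fun t => ‖intOp f t‖ ^ 2 * Real.exp (-2 * ϱ * t)) := hmem2.2
  have hlow : 1/β * (1/μ^2) ≤ wInt ϱ (intOp f) := by
    have hcongr : ∫ t in Iio 0, ‖intOp f t‖ ^ 2 * Real.exp (-2 * ϱ * t)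
        = ∫ t in Iio 0, Real.exp (β * t) * (1/μ^2) := by
      refine setIntegral_congr_fun measurableSet_Iio (fun t ht => ?_)
      have hmin : min t 0 = t := min_eq_left (le_of_lt ht)
      rw [hiop t, hmin]
      rw [show ‖((Real.exp (μ * t) / μ : ℝ) : ℂ)‖ = Real.exp (μ * t) / μ from by
        rw [Complex.norm_real, Real.norm_eq_abs,
          abs_of_pos (div_pos (Real.exp_pos _) hμ0)]]
      rw [div_pow, exp_sq, hβdef]
      rw [div_mul_eq_mul_div, ← Real.exp_add]
      rw [show Real.exp (2 * (μ * t) + -2 * ϱ * t) = Real.exp (2 * (μ - ϱ) * t) from by ring_nf]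
      ring
    have hval : ∫ t in Iio 0, Real.exp (β * t) * (1/μ^2) = 1/β * (1/μ^2) := by
      rw [integral_mul_const, ← integral_Iic_eq_integral_Iio, expIntVal hβ]
      simp
    calc 1/β * (1/μ^2) = ∫ t in Iio 0, ‖intOp f t‖ ^ 2 * Real.exp (-2 * ϱ * t) := by
          rw [hcongr, hval]
      _ ≤ wInt ϱ (intOp f) := setIntegral_le_integral hint2
          (Filter.Eventually.of_forall (fun t => mul_nonneg (sq_nonneg _) (Real.exp_pos _).le))
  refine ⟨f, hmem, ?_⟩
  have hwfpos : 0 < wNorm ϱ f := by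
    rw [wNorm, hwf]
    exact Real.sqrt_pos.2 (by positivity)
  have hstep1 : c * wNorm ϱ f < 1/μ * wNorm ϱ f :=
    mul_lt_mul_of_pos_right hcμ hwfpos
  have hstep2 : 1/μ * wNorm ϱ f ≤ wNorm ϱ (intOp f) := by
    rw [wNorm, wNorm, hwf]
    have hsq : Real.sqrt (1/β * (1/μ^2)) = Real.sqrt (1/β) * (1/μ) := by
      rw [Real.sqrt_mul (by positivity), one_div (μ^2), Real.sqrt_inv, Real.sqrt_sq hμ0.le,
        one_div]
      rw [one_div]
    calc 1/μ * Real.sqrt (1/β) = Real.sqrt (1/β * (1/μ^2)) := by rw [hsq]; ring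
      _ ≤ Real.sqrt (wInt ϱ (intOp f)) := Real.sqrt_le_sqrt hlow
  linarith


theorem stmt0 (ϱ : ℝ) (hϱ : 0 < ϱ) :
    (∀ f g : ℝ → ℂ, memW ϱ f → memW ϱ g →
      ∀ t : ℝ, intOp (f + g) t = intOp f t + intOp g t) ∧
    (∀ (c : ℂ) (f : ℝ → ℂ) (t : ℝ), intOp (c • f) t = c • intOp f t) ∧
    (∀ f : ℝ → ℂ, memW ϱ f →
      memW ϱ (intOp f) ∧ wNorm ϱ (intOp f) ≤ (1 / ϱ) * wNorm ϱ f) ∧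
    (∀ c : ℝ, 0 ≤ c → c < 1 / ϱ →
      ∃ f : ℝ → ℂ, memW ϱ f ∧ c * wNorm ϱ f < wNorm ϱ (intOp f)) := by
  refine ⟨?_, ?_, ?_, ?_⟩
  · intro f g hf hg t
    simp only [intOp, Pi.add_apply]
    exact integral_add (memW.integrableOn hϱ hf t) (memW.integrableOn hϱ hg t)
  · intro c f t
    simp only [intOp, Pi.smul_apply]
    exact integral_smul c f
  · intro f hf
    obtain ⟨hmem, hint⟩ := main3 hϱ hf
    refine ⟨hmem, ?_⟩
    rw [wNorm, wNorm]
    calc Real.sqrt (wInt ϱ (intOp f)) ≤ Real.sqrt (1/ϱ * (1/ϱ * wInt ϱ f)) :=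
          Real.sqrt_le_sqrt hint
      _ = 1/ϱ * Real.sqrt (wInt ϱ f) := by
          rw [show 1/ϱ * (1/ϱ * wInt ϱ f) = (1/ϱ)^2 * wInt ϱ f from by ring,
            Real.sqrt_mul (sq_nonneg _), Real.sqrt_sq (by positivity)]
  · intro c hc0 hc
    exact main4 hϱ hc0 hc
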